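/- arXiv:1808.08704 — 4 statements merged into one kernel-verified Lean document; each statement's English description precedes it below -/
import Mathlib

section
/- For 1 < b < 2, all power series coefficients of h_b(u) = u/(1-(1-u)^b) around 0 are nonnegative (in fact positive up to the factor 1/b structure). -/
set_option maxHeartbeats 1000000

open Finset Filter Nat ENNReal NNReal PowerSeries



lemma analytic_one_sub_rpow (b : ℝ) : AnalyticAt ℝ (fun y : ℝ => (1 - y) ^ b) 0 := by
  have hC : AnalyticAt ℂ (fun z : ℂ => (1 - z) ^ (b : ℂ)) 0 := by
    apply AnalyticAt.cpow (analyticAt_const.sub (analyticAt_id)) analyticAt_const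
    simp [Complex.slitPlane]
  have hR : AnalyticAt ℝ (fun y : ℝ => ((1 - (y : ℂ)) ^ (b : ℂ))) 0 := by
    have h1 : AnalyticAt ℝ (fun z : ℂ => (1 - z) ^ (b : ℂ)) (((0:ℝ) : ℂ)) := by
      simpa using hC.restrictScalars
    have h2 : AnalyticAt ℝ (fun y : ℝ => (y : ℂ)) 0 := Complex.ofRealCLM.analyticAt 0
    exact h1.comp h2
  have hRe : AnalyticAt ℝ (fun y : ℝ => ((1 - (y : ℂ)) ^ (b : ℂ)).re) 0 :=
    (Complex.reCLM.analyticAt _).comp hR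
  apply hRe.congr
  filter_upwards [Iio_mem_nhds (show (0:ℝ) < 1 by norm_num)] with y hy
  have h0 : (0:ℝ) ≤ 1 - y := by exact le_of_lt (by simpa using hy)
  rw [show ((1 : ℂ) - (y:ℂ)) = (((1 - y : ℝ)) : ℂ) by push_cast; ring,
    ← Complex.ofReal_cpow h0 b, Complex.ofReal_re]

lemma iter_deriv_one_sub_rpow (b : ℝ) : ∀ n : ℕ, ∀ x : ℝ, x < 1 →
    iteratedDeriv n (fun y : ℝ => (1 - y) ^ b) x
      = (-1) ^ n * (∏ i ∈ Finset.range n, (b - i)) * (1 - x) ^ (b - n) := by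
  intro n
  induction n with
  | zero => intro x hx; simp
  | succ n ih =>
    intro x hx
    rw [iteratedDeriv_succ]
    have hev : iteratedDeriv n (fun y : ℝ => (1 - y) ^ b)
        =ᶠ[nhds x] fun y => (-1) ^ n * (∏ i ∈ Finset.range n, (b - i)) * (1 - y) ^ (b - n) := by
      filter_upwards [Iio_mem_nhds hx] with y hy using ih y hy
    rw [hev.deriv_eq]
    have h1 : HasDerivAt (fun y : ℝ => 1 - y) (-1) x := by
      simpa using (hasDerivAt_id x).const_sub 1
    have h2 : HasDerivAt (fun y : ℝ => (1 - y) ^ (b - n))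
        (-1 * (b - n) * (1 - x) ^ (b - n - 1)) x :=
      h1.rpow_const (Or.inl (ne_of_gt (by linarith)))
    have h3 := h2.const_mul ((-1:ℝ) ^ n * ∏ i ∈ Finset.range n, (b - i))
    rw [h3.deriv]
    have he : b - (n:ℝ) - 1 = b - ((n+1 : ℕ) : ℝ) := by push_cast; ring
    rw [he, Finset.prod_range_succ]
    push_cast
    ring

lemma binom_hasSum (b : ℝ) : ∃ r : ℝ, 0 < r ∧ r ≤ 1 ∧ ∀ y : ℝ, |y| < r →
    HasSum (fun n : ℕ => (((-1) ^ n * ∏ i ∈ Finset.range n, (b - i)) / n !) * y ^ n)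
      ((1 - y) ^ b) := by
  obtain ⟨p, R, hR⟩ := analytic_one_sub_rpow b
  obtain ⟨ε, hε0, hεR⟩ := ENNReal.lt_iff_exists_nnreal_btwn.mp hR.r_pos
  refine ⟨min ε 1, lt_min (by exact_mod_cast hε0) one_pos, min_le_right _ _, fun y hy => ?_⟩
  have hy1 : |y| < 1 := lt_of_lt_of_le hy (min_le_right _ _)
  have hmem : y ∈ Metric.eball (0:ℝ) R := by
    rw [Metric.mem_eball, edist_zero_right]
    calc (‖y‖₊ : ℝ≥0∞) < (ε : ℝ≥0∞) := by
          rw [ENNReal.coe_lt_coe, ← NNReal.coe_lt_coe, coe_nnnorm, Real.norm_eq_abs]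
          exact lt_of_lt_of_le hy (min_le_left _ _)
      _ < R := hεR
  have hs := hR.hasSum_iteratedFDeriv hmem
  simp only [zero_add] at hs
  convert hs using 2 with n
  · rfl
  rw [iteratedFDeriv_apply_eq_iteratedDeriv_mul_prod]
  rw [iter_deriv_one_sub_rpow b n 0 one_pos]
  simp only [Finset.prod_const, Finset.card_univ, Fintype.card_fin, sub_zero,
    Real.one_rpow, smul_eq_mul]
  ring

noncomputable def sibD (b : ℝ) (n : ℕ) : ℝ := ((-1) ^ n * ∏ i ∈ Finset.range n, (b - i)) / n !
noncomputable def sibA (b : ℝ) (n : ℕ) : ℝ := if n = 0 then 0 else sibD b (n + 1) / b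
noncomputable def sibS (b : ℝ) (u : ℝ) : ℝ := ((1 - u) ^ b - 1) * (b * u)⁻¹ + 1

lemma sibA_nonneg {b : ℝ} (hb1 : 1 < b) (hb2 : b < 2) (n : ℕ) : 0 ≤ sibA b n := by
  have key : ∀ m : ℕ, 0 ≤ (-1 : ℝ) ^ (m + 2) * ∏ i ∈ Finset.range (m + 2), (b - i) := by
    intro m
    induction m with
    | zero =>
      simp [Finset.prod_range_succ]
      nlinarith
    | succ m ih =>
      have h2 : (0:ℝ) ≤ ((m:ℝ) + 2) - b := by linarith [Nat.cast_nonneg (α := ℝ) m]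
      have hp : (∏ i ∈ Finset.range (m + 1 + 2), (b - (i:ℝ)))
          = (∏ i ∈ Finset.range (m + 2), (b - (i:ℝ))) * (b - ((m:ℝ) + 2)) := by
        rw [show m + 1 + 2 = (m + 2) + 1 by ring, Finset.prod_range_succ]
        push_cast
        ring
      have hq : (-1:ℝ) ^ (m + 1 + 2) = (-1) ^ (m + 2) * (-1) := by
        rw [show m + 1 + 2 = (m + 2) + 1 by ring, pow_succ]
      rw [hp, hq]
      calc (0:ℝ) ≤ ((-1 : ℝ) ^ (m + 2) * ∏ i ∈ Finset.range (m + 2), (b - i)) * (((m:ℝ) + 2) - b) :=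
            mul_nonneg ih h2
        _ = (-1 : ℝ) ^ (m + 2) * -1 * ((∏ i ∈ Finset.range (m + 2), (b - (i:ℝ))) * (b - ((m:ℝ) + 2))) := by
            ring
  cases n with
  | zero => simp [sibA]
  | succ m =>
    have hkey := key m
    have hb0 : (0:ℝ) < b := by linarith
    simp only [sibA, Nat.succ_ne_zero, if_false, sibD]
    have h1 : (0:ℝ) < (m + 1 + 1)! := by positivity
    rw [show m + 1 + 1 = m + 2 by ring] at *
    exact div_nonneg (div_nonneg hkey (by positivity)) hb0.le

lemma coeff_pow_nonneg {a : ℕ → ℝ} (ha : ∀ n, 0 ≤ a n) (k n : ℕ) :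
    0 ≤ PowerSeries.coeff n ((PowerSeries.mk a) ^ k) := by
  induction k generalizing n with
  | zero =>
    rw [pow_zero, PowerSeries.coeff_one]
    split_ifs <;> norm_num
  | succ k ih =>
    rw [pow_succ, PowerSeries.coeff_mul]
    refine Finset.sum_nonneg fun p _ => mul_nonneg (ih p.1) ?_
    simpa using ha p.2

lemma coeff_pow_eq_zero {a : ℕ → ℝ} (ha0 : a 0 = 0) :
    ∀ {k n : ℕ}, n < k → PowerSeries.coeff n ((PowerSeries.mk a) ^ k) = 0 := by
  intro k
  induction k with
  | zero => intro n h; omega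
  | succ k ih =>
    intro n h
    rw [pow_succ, PowerSeries.coeff_mul]
    apply Finset.sum_eq_zero
    intro p hp
    have hpn := Finset.HasAntidiagonal.mem_antidiagonal.mp hp
    by_cases h1 : p.1 < k
    · rw [ih h1, zero_mul]
    · have h2 : p.2 = 0 := by omega
      rw [h2]
      simp [ha0]

lemma cauchy_step {c e : ℕ → ℝ} {u C E : ℝ}
    (hc : ∀ n, 0 ≤ c n) (he : ∀ n, 0 ≤ e n)
    (h1 : HasSum (fun n => c n * u ^ n) C) (h2 : HasSum (fun n => e n * u ^ n) E)
    (h1a : Summable (fun n => c n * |u| ^ n)) (h2a : Summable (fun n => e n * |u| ^ n)) :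
    HasSum (fun n => (∑ kl ∈ Finset.HasAntidiagonal.antidiagonal n, c kl.1 * e kl.2) * u ^ n) (C * E) := by
  have hnf : Summable (fun n => ‖c n * u ^ n‖) := by
    have : (fun n => ‖c n * u ^ n‖) = fun n => c n * |u| ^ n := by
      funext n
      rw [Real.norm_eq_abs, abs_mul, abs_pow, abs_of_nonneg (hc n)]
    rw [this]; exact h1a
  have hng : Summable (fun n => ‖e n * u ^ n‖) := by
    have : (fun n => ‖e n * u ^ n‖) = fun n => e n * |u| ^ n := by
      funext n
      rw [Real.norm_eq_abs, abs_mul, abs_pow, abs_of_nonneg (he n)]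
    rw [this]; exact h2a
  have hmul := summable_mul_of_summable_norm hnf hng
  have hprod := (summable_norm_sum_mul_antidiagonal_of_summable_norm hnf hng).of_norm
  have htsum := tsum_mul_tsum_eq_tsum_sum_antidiagonal_of_summable_norm hnf hng
  rw [h1.tsum_eq, h2.tsum_eq] at htsum
  have hh := hprod.hasSum
  rw [← htsum] at hh
  convert hh using 1
  · rfl
  funext n
  rw [Finset.sum_mul]
  apply Finset.sum_congr rfl
  intro kl hkl
  have hkl' := Finset.HasAntidiagonal.mem_antidiagonal.mp hkl
  rw [← hkl', pow_add]
  ring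

lemma pow_hasSum {a : ℕ → ℝ} (ha : ∀ n, 0 ≤ a n) {r : ℝ} {S : ℝ → ℝ}
    (hS : ∀ u : ℝ, 0 < |u| → |u| < r → HasSum (fun n => a n * u ^ n) (S u)) :
    ∀ k : ℕ, ∀ u : ℝ, 0 < |u| → |u| < r →
      HasSum (fun n => PowerSeries.coeff n ((PowerSeries.mk a) ^ k) * u ^ n) (S u ^ k) := by
  intro k
  induction k with
  | zero =>
    intro u hu0 hur
    simp only [pow_zero]
    have hfn : (fun n : ℕ => PowerSeries.coeff n (1 : PowerSeries ℝ) * u ^ n)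
        = fun n : ℕ => if n = 0 then 1 else 0 := by
      funext n; rw [PowerSeries.coeff_one]; split_ifs with h <;> simp [h]
    rw [hfn]
    exact hasSum_ite_eq 0 1
  | succ k ih =>
    intro u hu0 hur
    have hta0 : 0 < |(|u|)| := by rwa [abs_abs]
    have hta : |(|u|)| < r := by rwa [abs_abs]
    have h1 := ih u hu0 hur
    have h2 := hS u hu0 hur
    have h1a : Summable (fun n => PowerSeries.coeff n ((PowerSeries.mk a) ^ k) * |u| ^ n) :=
      (ih |u| hta0 hta).summable
    have h2a : Summable (fun n => a n * |u| ^ n) := (hS |u| hta0 hta).summable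
    have step := cauchy_step (coeff_pow_nonneg ha k) ha h1 h2 h1a h2a
    have hfun : (fun n => PowerSeries.coeff n ((PowerSeries.mk a) ^ (k + 1)) * u ^ n)
        = fun n => (∑ kl ∈ Finset.HasAntidiagonal.antidiagonal n,
            PowerSeries.coeff kl.1 ((PowerSeries.mk a) ^ k) * a kl.2) * u ^ n := by
      funext n
      rw [pow_succ, PowerSeries.coeff_mul]
      congr 1
      apply Finset.sum_congr rfl
      intro kl _
      rw [PowerSeries.coeff_mk]
    rw [hfun, pow_succ]
    exact step

lemma sibS_hasSum {b r : ℝ} (hb0 : 0 < b)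
    (hd : ∀ y : ℝ, |y| < r → HasSum (fun n : ℕ => sibD b n * y ^ n) ((1 - y) ^ b)) :
    ∀ u : ℝ, 0 < |u| → |u| < r → HasSum (fun n => sibA b n * u ^ n) (sibS b u) := by
  intro u hu0 hur
  have hu : u ≠ 0 := abs_pos.mp hu0
  have hbne : b ≠ 0 := ne_of_gt hb0
  have h1 := hd u hur
  have h2 : HasSum (fun n => sibD b (n + 1) * u ^ (n + 1)) ((1 - u) ^ b - 1) := by
    apply (hasSum_nat_add_iff (f := fun n => sibD b n * u ^ n) 1).mpr
    convert h1 using 1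
    · rfl
    rw [Finset.sum_range_one]
    simp [sibD]
  have h3 := h2.mul_right (b * u)⁻¹
  have h4 : HasSum (fun n => (sibD b (n + 1) / b) * u ^ n) (((1 - u) ^ b - 1) * (b * u)⁻¹) := by
    convert h3 using 1
    · rfl
    funext n
    rw [pow_succ]
    field_simp
  have h5 := h4.add (hasSum_ite_eq 0 (1:ℝ))
  convert h5 using 1
  funext n
  cases n with
  | zero =>
    simp only [sibA, if_pos rfl, sibD]
    simp [Finset.prod_range_one]
    field_simp
    norm_num
  | succ m =>
    simp [sibA]
  rfl



/-- For `1 < b < 2`, the power series coefficients of `h_b(u) = u/(1-(1-u)^b)` at `0`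
are all nonnegative. -/
theorem sibuya_nonneg_coeff (b : ℝ) (hb1 : 1 < b) (hb2 : b < 2) :
    ∃ c : ℕ → ℝ, (∀ n : ℕ, 0 ≤ c n) ∧
      ∃ r : ℝ, 0 < r ∧ ∀ u : ℝ, 0 < |u| → |u| < r →
        HasSum (fun n : ℕ => c n * u ^ n) (u / (1 - (1 - u) ^ b)) := by
  obtain ⟨r₀, hr₀pos, hr₀le, hd⟩ := binom_hasSum b
  have hb0 : (0:ℝ) < b := by linarith
  have hbne : b ≠ 0 := ne_of_gt hb0
  have ha : ∀ n, 0 ≤ sibA b n := sibA_nonneg hb1 hb2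
  have hS : ∀ u : ℝ, 0 < |u| → |u| < r₀ → HasSum (fun n => sibA b n * u ^ n) (sibS b u) :=
    sibS_hasSum hb0 (fun y hy => hd y hy)
  have hP := pow_hasSum ha hS
  refine ⟨fun n => (∑ k ∈ Finset.range (n + 1),
      PowerSeries.coeff n ((PowerSeries.mk (sibA b)) ^ k)) / b, ?_, r₀, hr₀pos, ?_⟩
  · intro n
    exact div_nonneg (Finset.sum_nonneg fun k _ => coeff_pow_nonneg ha k n) hb0.le
  · intro u hu0 hur
    have hu : u ≠ 0 := abs_pos.mp hu0
    have hta0 : 0 < |(|u|)| := by rwa [abs_abs]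
    have hta : |(|u|)| < r₀ := by rwa [abs_abs]
    have hu1 : |u| < 1 := lt_of_lt_of_le hur hr₀le
    -- bounds on sibS
    have hq0 : 0 ≤ sibS b |u| := by
      refine hasSum_le (fun n => ?_) hasSum_zero (hS |u| hta0 hta)
      exact mul_nonneg (ha n) (pow_nonneg (abs_nonneg u) n)
    have hq1 : sibS b |u| < 1 := by
      unfold sibS
      have h1 : (1 - |u|) ^ b < 1 := Real.rpow_lt_one (by linarith) (by linarith) hb0
      have h2 : (0:ℝ) < (b * |u|)⁻¹ := by positivity
      have h3 := mul_neg_of_neg_of_pos (show (1 - |u|) ^ b - 1 < 0 by linarith) h2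
      linarith
    have habsS : |sibS b u| < 1 := by
      have h1 := hS u hu0 hur
      have h2 := hS |u| hta0 hta
      have hsumm : Summable (fun n => ‖sibA b n * u ^ n‖) := by
        have : (fun n => ‖sibA b n * u ^ n‖) = fun n => sibA b n * |u| ^ n := by
          funext n
          rw [Real.norm_eq_abs, abs_mul, abs_pow, abs_of_nonneg (ha n)]
        rw [this]; exact h2.summable
      have hle : ‖sibS b u‖ ≤ ∑' n, ‖sibA b n * u ^ n‖ := by
        rw [← h1.tsum_eq]; exact norm_tsum_le_tsum_norm hsumm
      have heq : ∑' n, ‖sibA b n * u ^ n‖ = sibS b |u| := by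
        have : (fun n => ‖sibA b n * u ^ n‖) = fun n => sibA b n * |u| ^ n := by
          funext n
          rw [Real.norm_eq_abs, abs_mul, abs_pow, abs_of_nonneg (ha n)]
        rw [this, h2.tsum_eq]
      rw [Real.norm_eq_abs] at hle
      calc |sibS b u| ≤ sibS b |u| := heq ▸ hle
        _ < 1 := hq1
    -- summability on ℕ × ℕ
    set F : ℕ × ℕ → ℝ := fun p => PowerSeries.coeff p.2 ((PowerSeries.mk (sibA b)) ^ p.1) * u ^ p.2 with hF_def
    have hFa : Summable (fun p : ℕ × ℕ =>
        PowerSeries.coeff p.2 ((PowerSeries.mk (sibA b)) ^ p.1) * |u| ^ p.2) := by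
      apply (summable_prod_of_nonneg ?_).mpr
      constructor
      · intro k; exact (hP k |u| hta0 hta).summable
      · have hfe : (fun k => ∑' n, PowerSeries.coeff n ((PowerSeries.mk (sibA b)) ^ k) * |u| ^ n)
            = fun k => sibS b |u| ^ k := funext fun k => (hP k |u| hta0 hta).tsum_eq
        rw [hfe]
        exact summable_geometric_of_lt_one hq0 hq1
      · exact fun p => mul_nonneg (coeff_pow_nonneg ha p.1 p.2) (pow_nonneg (abs_nonneg u) p.2)
    have hF : Summable F := by
      apply Summable.of_norm
      have : (fun p : ℕ × ℕ => ‖F p‖) = fun p : ℕ × ℕ =>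
          PowerSeries.coeff p.2 ((PowerSeries.mk (sibA b)) ^ p.1) * |u| ^ p.2 := by
        funext p
        rw [hF_def, Real.norm_eq_abs, abs_mul, abs_pow, abs_of_nonneg (coeff_pow_nonneg ha p.1 p.2)]
      rw [this]; exact hFa
    have hswap : Summable (fun p : ℕ × ℕ => F p.swap) := hF.prod_symm
    -- fiberwise
    have hfib : ∀ n : ℕ, HasSum (fun k => F (k, n))
        ((∑ k ∈ Finset.range (n + 1),
          PowerSeries.coeff n ((PowerSeries.mk (sibA b)) ^ k)) * u ^ n) := by
      intro n
      have h0 : ∀ k ∉ Finset.range (n + 1), F (k, n) = 0 := by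
        intro k hk
        have hnk : n < k := by
          by_contra h
          exact hk (Finset.mem_range.mpr (by omega))
        have hz := coeff_pow_eq_zero (a := sibA b) (by simp [sibA]) hnk
        simp [hF_def, hz]
      have hss : HasSum (fun k => F (k, n)) _ := hasSum_sum_of_ne_finset_zero h0
      convert hss using 1
      rw [Finset.sum_mul]
    have hmain := HasSum.prod_fiberwise hswap.hasSum hfib
    have hT : (∑' p : ℕ × ℕ, F p.swap) = (1 - sibS b u)⁻¹ := by
      have he : (∑' p : ℕ × ℕ, F p.swap) = ∑' p : ℕ × ℕ, F p :=
        (Equiv.prodComm ℕ ℕ).tsum_eq F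
      rw [he, Summable.tsum_prod' hF (fun k => (hP k u hu0 hur).summable)]
      have hinner : ∀ k, ∑' n, F (k, n) = sibS b u ^ k := fun k => (hP k u hu0 hur).tsum_eq
      rw [tsum_congr hinner, tsum_geometric_of_norm_lt_one (by rwa [Real.norm_eq_abs])]
    rw [hT] at hmain
    have hfinal := hmain.div_const b
    have h1S : 1 - sibS b u = (1 - (1 - u) ^ b) * (b * u)⁻¹ := by unfold sibS; ring
    have hpos : 0 < 1 - sibS b u := by
      rcases abs_lt.mp habsS with ⟨h, h'⟩
      linarith
    have hDne : 1 - (1 - u) ^ b ≠ 0 := by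
      intro h
      rw [h1S, h, zero_mul] at hpos
      exact lt_irrefl 0 hpos
    have hval : (1 - sibS b u)⁻¹ / b = u / (1 - (1 - u) ^ b) := by
      rw [h1S]
      field_simp
    rw [hval] at hfinal
    convert hfinal using 1
    · rfl
    funext n
    ring
end

section
/- For b > 3, the coefficient P_5 = (9-b²)(b²-1)/4 in the expansion of bu/(1-(1-u)^b) is negative; hence the Sibuya distribution s_{1/b} is not a progeny for b > 3. -/
private def sibuyaDD (g : ℕ → ℝ) : ℕ → ℝ := fun k => g (k + 1) - g k

private lemma sibuyaDD_sum (m : ℕ) (s : Finset ℕ) (F : ℕ → ℕ → ℝ) :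
    sibuyaDD^[m] (fun k => ∑ j ∈ s, F j k) = fun k => ∑ j ∈ s, sibuyaDD^[m] (F j) k := by
  induction m generalizing F with
  | zero => simp
  | succ m ih =>
    simp only [Function.iterate_succ_apply]
    have : sibuyaDD (fun k => ∑ j ∈ s, F j k) = fun k => ∑ j ∈ s, sibuyaDD (F j) k := by
      funext k; simp [sibuyaDD, Finset.sum_sub_distrib]
    rw [this, ih (fun j => sibuyaDD (F j))]

private lemma sibuyaDD_const_mul (m : ℕ) (a : ℝ) (g : ℕ → ℝ) :
    sibuyaDD^[m] (fun k => a * g k) = fun k => a * sibuyaDD^[m] g k := by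
  induction m generalizing g with
  | zero => simp
  | succ m ih =>
    simp only [Function.iterate_succ_apply]
    have : sibuyaDD (fun k => a * g k) = fun k => a * sibuyaDD g k := by
      funext k; simp [sibuyaDD]; ring
    rw [this, ih]

private lemma sibuyaDD_nonneg : ∀ n m k : ℕ, 0 ≤ sibuyaDD^[m] (fun j : ℕ => ((j : ℝ) + 1) ^ n) k := by
  intro n
  induction n using Nat.strong_induction_on with
  | _ n ih =>
    intro m k
    cases m with
    | zero => simp only [Function.iterate_zero, id]; positivity
    | succ m =>
      rw [Function.iterate_succ_apply]
      have hdd : sibuyaDD (fun j : ℕ => ((j : ℝ) + 1) ^ n)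
          = fun k : ℕ => ∑ j ∈ Finset.range n, (n.choose j : ℝ) * ((k : ℝ) + 1) ^ j := by
        funext k
        have hbin : (((k : ℝ) + 1) + 1) ^ n
            = ∑ j ∈ Finset.range (n + 1), ((k : ℝ) + 1) ^ j * 1 ^ (n - j) * (n.choose j : ℝ) :=
          add_pow _ _ _
        simp only [sibuyaDD]
        push_cast
        rw [hbin, Finset.sum_range_succ]
        simp only [one_pow, mul_one, Nat.choose_self, Nat.cast_one]
        ring_nf
      rw [hdd, sibuyaDD_sum m (Finset.range n) (fun j k => (n.choose j : ℝ) * ((k : ℝ) + 1) ^ j)]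
      apply Finset.sum_nonneg
      intro j hj
      rw [sibuyaDD_const_mul]
      exact mul_nonneg (by positivity) (ih j (Finset.mem_range.mp hj) m k)

private lemma sibuya_e_nonneg (n : ℕ) :
    0 ≤ (6 : ℝ) ^ n - 5 * 5 ^ n + 10 * 4 ^ n - 10 * 3 ^ n + 5 * 2 ^ n - 1 := by
  have h := sibuyaDD_nonneg n 5 0
  have : sibuyaDD^[5] (fun j : ℕ => ((j : ℝ) + 1) ^ n) 0
      = (6 : ℝ) ^ n - 5 * 5 ^ n + 10 * 4 ^ n - 10 * 3 ^ n + 5 * 2 ^ n - 1 := by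
    simp [Function.iterate_succ_apply', sibuyaDD]
    norm_num
    ring
  linarith [this ▸ h]

private lemma sibuya_mono_aux {F F' : ℝ → ℝ}
    (h0 : F 0 = 0)
    (hd : ∀ t ∈ Set.Icc (0 : ℝ) (1 / 2), HasDerivAt F (F' t) t)
    (hge : ∀ t ∈ Set.Icc (0 : ℝ) (1 / 2), 0 ≤ F' t) :
    ∀ y ∈ Set.Icc (0 : ℝ) (1 / 2), 0 ≤ F y := by
  intro y hy
  have hmono : MonotoneOn F (Set.Icc (0 : ℝ) (1 / 2)) := by
    apply monotoneOn_of_deriv_nonneg (convex_Icc _ _)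
    · exact fun t ht => (hd t ht).continuousAt.continuousWithinAt
    · intro t ht
      rw [interior_Icc] at ht
      exact ((hd t (Set.mem_Icc_of_Ioo ht)).differentiableAt).differentiableWithinAt
    · intro t ht
      rw [interior_Icc] at ht
      rw [(hd t (Set.mem_Icc_of_Ioo ht)).deriv]
      exact hge t (Set.mem_Icc_of_Ioo ht)
  have := hmono (Set.left_mem_Icc.mpr (by norm_num)) hy hy.1
  linarith [h0 ▸ this]

private lemma sibuya_step {g G : ℝ → ℝ} {c : ℝ} {m : ℕ}
    (h0 : g 0 = 0)
    (hd : ∀ t ∈ Set.Icc (0 : ℝ) (1 / 2), HasDerivAt g (G t) t)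
    (hbd : ∀ t ∈ Set.Icc (0 : ℝ) (1 / 2), |G t| ≤ c * t ^ m) :
    ∀ y ∈ Set.Icc (0 : ℝ) (1 / 2), |g y| ≤ c / (m + 1) * y ^ (m + 1) := by
  have hm1 : ((m : ℝ) + 1) ≠ 0 := by positivity
  have hpow : ∀ t : ℝ, HasDerivAt (fun t : ℝ => c / (m + 1) * t ^ (m + 1)) (c * t ^ m) t := by
    intro t
    have h := (hasDerivAt_pow (m + 1) t).const_mul (c / (m + 1))
    have he : c / (m + 1) * (((m + 1 : ℕ) : ℝ) * t ^ (m + 1 - 1)) = c * t ^ m := by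
      push_cast
      field_simp
    rw [he] at h
    exact h
  intro y hy
  rw [abs_le]
  constructor
  · have := sibuya_mono_aux (F := fun t => c / (m + 1) * t ^ (m + 1) + g t)
      (F' := fun t => c * t ^ m + G t) (by simp [h0])
      (fun t ht => (hpow t).add (hd t ht))
      (fun t ht => by
        have h1 := abs_le.mp (hbd t ht)
        show 0 ≤ c * t ^ m + G t
        linarith [h1.1]) y hy
    linarith
  · have := sibuya_mono_aux (F := fun t => c / (m + 1) * t ^ (m + 1) - g t)
      (F' := fun t => c * t ^ m - G t) (by simp [h0])
      (fun t ht => (hpow t).sub (hd t ht))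
      (fun t ht => by
        have h1 := abs_le.mp (hbd t ht)
        show 0 ≤ c * t ^ m - G t
        linarith [h1.2]) y hy
    linarith

private lemma sibuya_rpow_deriv (c : ℝ) {t : ℝ} (ht : t < 1) :
    HasDerivAt (fun s : ℝ => (1 - s) ^ c) (-(c * (1 - t) ^ (c - 1))) t := by
  have h1 : HasDerivAt (fun s : ℝ => 1 - s) (-1) t := by
    simpa using (hasDerivAt_id t).const_sub 1
  have h2 : HasDerivAt (fun x : ℝ => x ^ c) (c * (1 - t) ^ (c - 1)) (1 - t) :=
    Real.hasDerivAt_rpow_const (Or.inl (by linarith))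
  have := h2.comp t h1
  exact this.congr_deriv (by ring)
private lemma sibuya_h_taylor (b a2 a3 a4 a5 a6 a7 M0 : ℝ) (hb : 3 < b)
    (h2 : a2 = b * (b - 1)) (h3 : a3 = a2 * (b - 2)) (h4 : a4 = a3 * (b - 3))
    (h5 : a5 = a4 * (b - 4)) (h6 : a6 = a5 * (b - 5)) (h7 : a7 = a6 * (b - 6))
    (hM : M0 = 128 * |a7|) :
    ∀ y ∈ Set.Icc (0 : ℝ) (1 / 2),
      |(1 - (1 - y) ^ b) -
        (b * y - a2 / 2 * y ^ 2 + a3 / 6 * y ^ 3 - a4 / 24 * y ^ 4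
          + a5 / 120 * y ^ 5 - a6 / 720 * y ^ 6)| ≤ M0 / 5040 * y ^ 7 := by
  have hlt : ∀ t : ℝ, t ∈ Set.Icc (0 : ℝ) (1 / 2) → t < 1 := fun t ht => by
    have := ht.2; linarith
  have hpos : ∀ t : ℝ, t ∈ Set.Icc (0 : ℝ) (1 / 2) → (0 : ℝ) < 1 - t := fun t ht => by
    have := hlt t ht; linarith
  -- base bound on the 7th derivative
  have hbase : ∀ t ∈ Set.Icc (0 : ℝ) (1 / 2), |(-(a7 * (1 - t) ^ (b - 7)))| ≤ M0 * t ^ 0 := by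
    intro t ht
    have h1t : (0 : ℝ) < 1 - t := hpos t ht
    have hrb : (1 - t) ^ b ≤ 1 := Real.rpow_le_one (by linarith) (by linarith [ht.1]) (by linarith)
    have hr7 : ((1 : ℝ) / 2) ^ (7 : ℕ) ≤ (1 - t) ^ (7 : ℕ) := by
      apply pow_le_pow_left₀ (by norm_num)
      linarith [ht.2]
    have hrpow : (1 - t) ^ (b - 7) ≤ 128 := by
      rw [Real.rpow_sub h1t]
      have h7' : (1 - t) ^ (7 : ℝ) = (1 - t) ^ (7 : ℕ) := by
        rw [← Real.rpow_natCast (1 - t) 7]; norm_num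
      rw [h7']
      calc (1 - t) ^ b / (1 - t) ^ (7 : ℕ) ≤ 1 / ((1 : ℝ) / 2) ^ (7 : ℕ) := by
            apply div_le_div₀ (by norm_num) hrb (by norm_num) hr7
        _ = 128 := by norm_num
    rw [abs_neg, abs_mul, pow_zero, mul_one, hM]
    have hrnn : (0 : ℝ) ≤ (1 - t) ^ (b - 7) := Real.rpow_nonneg (by linarith) _
    rw [abs_of_nonneg hrnn]
    calc |a7| * (1 - t) ^ (b - 7) ≤ |a7| * 128 :=
          mul_le_mul_of_nonneg_left hrpow (abs_nonneg _)
      _ = 128 * |a7| := by ring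
  -- level 6
  have hd6 : ∀ t ∈ Set.Icc (0 : ℝ) (1 / 2),
      HasDerivAt (fun t : ℝ => a6 * (1 - t) ^ (b - 6) - a6) (-(a7 * (1 - t) ^ (b - 7))) t := by
    intro t ht
    have hdR := sibuya_rpow_deriv (b - 6) (hlt t ht)
    rw [show b - 6 - 1 = b - 7 from by ring] at hdR
    have := (hdR.const_mul a6).sub_const a6
    refine this.congr_deriv ?_
    rw [h7]; ring
  have hE6 : ∀ y ∈ Set.Icc (0 : ℝ) (1 / 2),
      |a6 * (1 - y) ^ (b - 6) - a6| ≤ M0 * y ^ 1 := by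
    intro y hy
    have h := sibuya_step (c := M0) (m := 0) (by simp [Real.one_rpow]) hd6 hbase y hy
    have he : M0 / ((0 : ℕ) + 1) = M0 := by norm_num
    rw [he] at h; exact h
  -- level 5
  have hd5 : ∀ t ∈ Set.Icc (0 : ℝ) (1 / 2),
      HasDerivAt (fun t : ℝ => a5 - a5 * (1 - t) ^ (b - 5) - a6 * t)
        (a6 * (1 - t) ^ (b - 6) - a6) t := by
    intro t ht
    have hdR := sibuya_rpow_deriv (b - 5) (hlt t ht)
    rw [show b - 5 - 1 = b - 6 from by ring] at hdR
    have := ((hdR.const_mul a5).const_sub a5).sub ((hasDerivAt_id t).const_mul a6)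
    refine this.congr_deriv ?_
    rw [h6]; ring
  have hE5 : ∀ y ∈ Set.Icc (0 : ℝ) (1 / 2),
      |a5 - a5 * (1 - y) ^ (b - 5) - a6 * y| ≤ M0 / 2 * y ^ 2 := by
    intro y hy
    have h := sibuya_step (c := M0) (m := 1) (by simp [Real.one_rpow]) hd5 hE6 y hy
    have he : M0 / ((1 : ℕ) + 1) = M0 / 2 := by norm_num
    rw [he] at h; exact h
  -- level 4
  have hd4 : ∀ t ∈ Set.Icc (0 : ℝ) (1 / 2),
      HasDerivAt (fun t : ℝ => a4 * (1 - t) ^ (b - 4) - a4 + a5 * t - a6 / 2 * t ^ 2)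
        (a5 - a5 * (1 - t) ^ (b - 5) - a6 * t) t := by
    intro t ht
    have hdR := sibuya_rpow_deriv (b - 4) (hlt t ht)
    rw [show b - 4 - 1 = b - 5 from by ring] at hdR
    have := (((hdR.const_mul a4).sub_const a4).add ((hasDerivAt_id t).const_mul a5)).sub
      ((hasDerivAt_pow 2 t).const_mul (a6 / 2))
    refine this.congr_deriv ?_
    rw [h5]; push_cast; ring
  have hE4 : ∀ y ∈ Set.Icc (0 : ℝ) (1 / 2),
      |a4 * (1 - y) ^ (b - 4) - a4 + a5 * y - a6 / 2 * y ^ 2| ≤ M0 / 6 * y ^ 3 := by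
    intro y hy
    have h := sibuya_step (c := M0 / 2) (m := 2) (by simp [Real.one_rpow]) hd4 hE5 y hy
    have he : M0 / 2 / ((2 : ℕ) + 1) = M0 / 6 := by norm_num; ring
    rw [he] at h; exact h
  -- level 3
  have hd3 : ∀ t ∈ Set.Icc (0 : ℝ) (1 / 2),
      HasDerivAt (fun t : ℝ => a3 - a3 * (1 - t) ^ (b - 3) - a4 * t + a5 / 2 * t ^ 2 - a6 / 6 * t ^ 3)
        (a4 * (1 - t) ^ (b - 4) - a4 + a5 * t - a6 / 2 * t ^ 2) t := by
    intro t ht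
    have hdR := sibuya_rpow_deriv (b - 3) (hlt t ht)
    rw [show b - 3 - 1 = b - 4 from by ring] at hdR
    have := ((((hdR.const_mul a3).const_sub a3).sub ((hasDerivAt_id t).const_mul a4)).add
      ((hasDerivAt_pow 2 t).const_mul (a5 / 2))).sub ((hasDerivAt_pow 3 t).const_mul (a6 / 6))
    refine this.congr_deriv ?_
    rw [h4]; push_cast; ring
  have hE3 : ∀ y ∈ Set.Icc (0 : ℝ) (1 / 2),
      |a3 - a3 * (1 - y) ^ (b - 3) - a4 * y + a5 / 2 * y ^ 2 - a6 / 6 * y ^ 3| ≤ M0 / 24 * y ^ 4 := by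
    intro y hy
    have h := sibuya_step (c := M0 / 6) (m := 3) (by simp [Real.one_rpow]) hd3 hE4 y hy
    have he : M0 / 6 / ((3 : ℕ) + 1) = M0 / 24 := by norm_num; ring
    rw [he] at h; exact h
  -- level 2
  have hd2 : ∀ t ∈ Set.Icc (0 : ℝ) (1 / 2),
      HasDerivAt (fun t : ℝ => a2 * (1 - t) ^ (b - 2) - a2 + a3 * t - a4 / 2 * t ^ 2
          + a5 / 6 * t ^ 3 - a6 / 24 * t ^ 4)
        (a3 - a3 * (1 - t) ^ (b - 3) - a4 * t + a5 / 2 * t ^ 2 - a6 / 6 * t ^ 3) t := by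
    intro t ht
    have hdR := sibuya_rpow_deriv (b - 2) (hlt t ht)
    rw [show b - 2 - 1 = b - 3 from by ring] at hdR
    have := (((((hdR.const_mul a2).sub_const a2).add ((hasDerivAt_id t).const_mul a3)).sub
      ((hasDerivAt_pow 2 t).const_mul (a4 / 2))).add
      ((hasDerivAt_pow 3 t).const_mul (a5 / 6))).sub ((hasDerivAt_pow 4 t).const_mul (a6 / 24))
    refine this.congr_deriv ?_
    rw [h3]; push_cast; ring
  have hE2 : ∀ y ∈ Set.Icc (0 : ℝ) (1 / 2),
      |a2 * (1 - y) ^ (b - 2) - a2 + a3 * y - a4 / 2 * y ^ 2 + a5 / 6 * y ^ 3 - a6 / 24 * y ^ 4|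
        ≤ M0 / 120 * y ^ 5 := by
    intro y hy
    have h := sibuya_step (c := M0 / 24) (m := 4) (by simp [Real.one_rpow]) hd2 hE3 y hy
    have he : M0 / 24 / ((4 : ℕ) + 1) = M0 / 120 := by norm_num; ring
    rw [he] at h; exact h
  -- level 1
  have hd1 : ∀ t ∈ Set.Icc (0 : ℝ) (1 / 2),
      HasDerivAt (fun t : ℝ => b - b * (1 - t) ^ (b - 1) - a2 * t + a3 / 2 * t ^ 2
          - a4 / 6 * t ^ 3 + a5 / 24 * t ^ 4 - a6 / 120 * t ^ 5)
        (a2 * (1 - t) ^ (b - 2) - a2 + a3 * t - a4 / 2 * t ^ 2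
          + a5 / 6 * t ^ 3 - a6 / 24 * t ^ 4) t := by
    intro t ht
    have hdR := sibuya_rpow_deriv (b - 1) (hlt t ht)
    rw [show b - 1 - 1 = b - 2 from by ring] at hdR
    have := ((((((hdR.const_mul b).const_sub b).sub ((hasDerivAt_id t).const_mul a2)).add
      ((hasDerivAt_pow 2 t).const_mul (a3 / 2))).sub
      ((hasDerivAt_pow 3 t).const_mul (a4 / 6))).add
      ((hasDerivAt_pow 4 t).const_mul (a5 / 24))).sub
      ((hasDerivAt_pow 5 t).const_mul (a6 / 120))
    refine this.congr_deriv ?_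
    rw [h2]; push_cast; ring
  have hE1 : ∀ y ∈ Set.Icc (0 : ℝ) (1 / 2),
      |b - b * (1 - y) ^ (b - 1) - a2 * y + a3 / 2 * y ^ 2 - a4 / 6 * y ^ 3
        + a5 / 24 * y ^ 4 - a6 / 120 * y ^ 5| ≤ M0 / 720 * y ^ 6 := by
    intro y hy
    have h := sibuya_step (c := M0 / 120) (m := 5) (by simp [Real.one_rpow]) hd1 hE2 y hy
    have he : M0 / 120 / ((5 : ℕ) + 1) = M0 / 720 := by norm_num; ring
    rw [he] at h; exact h
  -- level 0
  have hd0 : ∀ t ∈ Set.Icc (0 : ℝ) (1 / 2),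
      HasDerivAt (fun t : ℝ => (1 - t) ^ b - 1 + b * t - a2 / 2 * t ^ 2 + a3 / 6 * t ^ 3
          - a4 / 24 * t ^ 4 + a5 / 120 * t ^ 5 - a6 / 720 * t ^ 6)
        (b - b * (1 - t) ^ (b - 1) - a2 * t + a3 / 2 * t ^ 2 - a4 / 6 * t ^ 3
          + a5 / 24 * t ^ 4 - a6 / 120 * t ^ 5) t := by
    intro t ht
    have hdR := sibuya_rpow_deriv b (hlt t ht)
    have := ((((((hdR.sub_const 1).add ((hasDerivAt_id t).const_mul b)).sub
      ((hasDerivAt_pow 2 t).const_mul (a2 / 2))).add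
      ((hasDerivAt_pow 3 t).const_mul (a3 / 6))).sub
      ((hasDerivAt_pow 4 t).const_mul (a4 / 24))).add
      ((hasDerivAt_pow 5 t).const_mul (a5 / 120))).sub
      ((hasDerivAt_pow 6 t).const_mul (a6 / 720))
    refine this.congr_deriv ?_
    push_cast; ring
  have hE0 : ∀ y ∈ Set.Icc (0 : ℝ) (1 / 2),
      |(1 - y) ^ b - 1 + b * y - a2 / 2 * y ^ 2 + a3 / 6 * y ^ 3 - a4 / 24 * y ^ 4
        + a5 / 120 * y ^ 5 - a6 / 720 * y ^ 6| ≤ M0 / 5040 * y ^ 7 := by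
    intro y hy
    have h := sibuya_step (c := M0 / 720) (m := 6) (by simp [Real.one_rpow]) hd0 hE1 y hy
    have he : M0 / 720 / ((6 : ℕ) + 1) = M0 / 5040 := by norm_num; ring
    rw [he] at h; exact h
  intro y hy
  have h := hE0 y hy
  have heq : (1 - (1 - y) ^ b) -
      (b * y - a2 / 2 * y ^ 2 + a3 / 6 * y ^ 3 - a4 / 24 * y ^ 4
        + a5 / 120 * y ^ 5 - a6 / 720 * y ^ 6)
      = -((1 - y) ^ b - 1 + b * y - a2 / 2 * y ^ 2 + a3 / 6 * y ^ 3 - a4 / 24 * y ^ 4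
        + a5 / 120 * y ^ 5 - a6 / 720 * y ^ 6) := by ring
  rw [heq, abs_neg]
  exact h
set_option maxHeartbeats 4000000 in
private lemma sibuya_iden (b : ℝ) (hb0 : b ≠ 0) (y : ℝ) :
    y - (1 / b + (b - 1) / (2 * b) * y + (b ^ 2 - 1) / (12 * b) * y ^ 2
        + (b ^ 2 - 1) / (24 * b) * y ^ 3 + (-b ^ 4 + 20 * b ^ 2 - 19) / (720 * b) * y ^ 4
        + (9 - b ^ 2) * (b ^ 2 - 1) / (480 * b) * y ^ 5)
      * (b * y - b * (b - 1) / 2 * y ^ 2 + b * (b - 1) * (b - 2) / 6 * y ^ 3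
        - b * (b - 1) * (b - 2) * (b - 3) / 24 * y ^ 4
        + b * (b - 1) * (b - 2) * (b - 3) * (b - 4) / 120 * y ^ 5
        - b * (b - 1) * (b - 2) * (b - 3) * (b - 4) * (b - 5) / 720 * y ^ 6)
    = y ^ 7 * ((1111 / 8640 - 7 / 20 * b + 61 / 180 * b ^ 2 - 7 / 48 * b ^ 3
        + 31 / 960 * b ^ 4 - 1 / 240 * b ^ 5 + 1 / 4320 * b ^ 6)
      + (101 / 2880 - 1219 / 17280 * b + 17 / 1440 * b ^ 2 + 37 / 640 * b ^ 3
        - 131 / 2880 * b ^ 4 + 73 / 5760 * b ^ 5 - 1 / 720 * b ^ 6 + 1 / 17280 * b ^ 7) * y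
      + (487 / 28800 - 245 / 6912 * b + 133 / 17280 * b ^ 2 + 67 / 2304 * b ^ 3
        - 11 / 450 * b ^ 4 + 5 / 768 * b ^ 5 - 1 / 5760 * b ^ 6 - 1 / 6912 * b ^ 7
        + 1 / 86400 * b ^ 8) * y ^ 2
      + (11 / 1350 - 1157 / 64800 * b + 17 / 3456 * b ^ 2 + 1511 / 103680 * b ^ 3
        - 193 / 14400 * b ^ 4 + 619 / 172800 * b ^ 5 + 1 / 3456 * b ^ 6 - 31 / 103680 * b ^ 7
        + 1 / 21600 * b ^ 8 - 1 / 518400 * b ^ 9) * y ^ 3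
      + (1 / 320 - 137 / 19200 * b + 11 / 4608 * b ^ 2 + 79 / 13824 * b ^ 3
        - 133 / 23040 * b ^ 4 + 21 / 12800 * b ^ 5 + 1 / 4608 * b ^ 6 - 1 / 4608 * b ^ 7
        + 1 / 23040 * b ^ 8 - 1 / 345600 * b ^ 9) * y ^ 4) := by
  field_simp
  ring
set_option maxHeartbeats 4000000 in
private lemma sibuya_neg_comb (b : ℝ) (hb : 3 < b) (ε : ℝ) (hε : 0 < ε) :
    ∃ x : ℝ, 0 < x ∧ x < ε ∧
      ((((6 * x / (1 - (1 - 6 * x) ^ b) - 5 * (5 * x / (1 - (1 - 5 * x) ^ b)))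
        + 10 * (4 * x / (1 - (1 - 4 * x) ^ b))) - 10 * (3 * x / (1 - (1 - 3 * x) ^ b)))
        + 5 * (2 * x / (1 - (1 - 2 * x) ^ b))) - x / (1 - (1 - x) ^ b) < 0 := by
  have hb0 : (0 : ℝ) < b := by linarith
  have hb0' : b ≠ 0 := ne_of_gt hb0
  have hTay := sibuya_h_taylor b (b * (b - 1)) (b * (b - 1) * (b - 2)) (b * (b - 1) * (b - 2) * (b - 3))
    (b * (b - 1) * (b - 2) * (b - 3) * (b - 4)) (b * (b - 1) * (b - 2) * (b - 3) * (b - 4) * (b - 5))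
    (b * (b - 1) * (b - 2) * (b - 3) * (b - 4) * (b - 5) * (b - 6))
    (128 * |b * (b - 1) * (b - 2) * (b - 3) * (b - 4) * (b - 5) * (b - 6)|) hb
    rfl rfl rfl rfl rfl rfl rfl
  obtain ⟨K, hKdef⟩ : ∃ K : ℝ, K = 128 * |b * (b - 1) * (b - 2) * (b - 3) * (b - 4) * (b - 5) * (b - 6)| / 5040 := ⟨_, rfl⟩
  have hKnn : 0 ≤ K := by rw [hKdef]; positivity
  obtain ⟨P, hPdef⟩ : ∃ P : ℝ → ℝ, P = fun y => b * y - b * (b - 1) / 2 * y ^ 2 + b * (b - 1) * (b - 2) / 6 * y ^ 3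
      - b * (b - 1) * (b - 2) * (b - 3) / 24 * y ^ 4
      + b * (b - 1) * (b - 2) * (b - 3) * (b - 4) / 120 * y ^ 5
      - b * (b - 1) * (b - 2) * (b - 3) * (b - 4) * (b - 5) / 720 * y ^ 6 := ⟨_, rfl⟩
  have hT : ∀ y ∈ Set.Icc (0 : ℝ) (1 / 2), |(1 - (1 - y) ^ b) - P y| ≤ K * y ^ 7 := by
    intro y hy
    rw [hPdef, hKdef]
    simpa using hTay y hy
  -- lower bound for the denominator
  obtain ⟨B, hBdef⟩ : ∃ B : ℝ, B = b * (b - 1) / 2 + |b * (b - 1) * (b - 2)| / 6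
      + |b * (b - 1) * (b - 2) * (b - 3)| / 24
      + |b * (b - 1) * (b - 2) * (b - 3) * (b - 4)| / 120
      + |b * (b - 1) * (b - 2) * (b - 3) * (b - 4) * (b - 5)| / 720 + K := ⟨_, rfl⟩
  have hBpos : 0 < B := by
    rw [hBdef]
    have h1 : 0 < b * (b - 1) / 2 := by nlinarith
    have h2 : (0:ℝ) ≤ |b * (b - 1) * (b - 2)| / 6 := by positivity
    have h3 : (0:ℝ) ≤ |b * (b - 1) * (b - 2) * (b - 3)| / 24 := by positivity
    have h4 : (0:ℝ) ≤ |b * (b - 1) * (b - 2) * (b - 3) * (b - 4)| / 120 := by positivity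
    have h5 : (0:ℝ) ≤ |b * (b - 1) * (b - 2) * (b - 3) * (b - 4) * (b - 5)| / 720 := by positivity
    linarith
  obtain ⟨δ, hδdef⟩ : ∃ δ : ℝ, δ = min (1 / 2) (b / (2 * B)) := ⟨_, rfl⟩
  have hδpos : 0 < δ := by
    rw [hδdef]
    exact lt_min (by norm_num) (div_pos hb0 (by linarith))
  have hδle : δ ≤ 1 / 2 := hδdef ▸ min_le_left _ _
  have hlow : ∀ y : ℝ, 0 < y → y ≤ δ → b * y / 2 ≤ 1 - (1 - y) ^ b := by
    intro y hy0 hyδ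
    have hyI : y ∈ Set.Icc (0 : ℝ) (1 / 2) := ⟨hy0.le, le_trans hyδ hδle⟩
    have ht := abs_le.mp (hT y hyI)
    have hy1 : y ≤ 1 := by linarith [hyI.2]
    have hp3 : y ^ 3 ≤ y ^ 2 := pow_le_pow_of_le_one hy0.le hy1 (by norm_num)
    have hp4 : y ^ 4 ≤ y ^ 2 := pow_le_pow_of_le_one hy0.le hy1 (by norm_num)
    have hp5 : y ^ 5 ≤ y ^ 2 := pow_le_pow_of_le_one hy0.le hy1 (by norm_num)
    have hp6 : y ^ 6 ≤ y ^ 2 := pow_le_pow_of_le_one hy0.le hy1 (by norm_num)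
    have hp7 : y ^ 7 ≤ y ^ 2 := pow_le_pow_of_le_one hy0.le hy1 (by norm_num)
    have hPB : b * y - B * y ^ 2 ≤ P y - K * y ^ 7 := by
      simp only [hPdef, hBdef]
      have e3 : -( |b * (b - 1) * (b - 2)| / 6 * y ^ 2) ≤ b * (b - 1) * (b - 2) / 6 * y ^ 3 := by
        have m1 : -(|b * (b - 1) * (b - 2)|) * y ^ 3 ≤ b * (b - 1) * (b - 2) * y ^ 3 :=
          mul_le_mul_of_nonneg_right (neg_abs_le _) (pow_nonneg hy0.le 3)
        have m2 : |b * (b - 1) * (b - 2)| * y ^ 3 ≤ |b * (b - 1) * (b - 2)| * y ^ 2 :=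
          mul_le_mul_of_nonneg_left hp3 (abs_nonneg _)
        linarith
      have e4 : -( |b * (b - 1) * (b - 2) * (b - 3)| / 24 * y ^ 2)
          ≤ -(b * (b - 1) * (b - 2) * (b - 3) / 24 * y ^ 4) := by
        have m1 : b * (b - 1) * (b - 2) * (b - 3) * y ^ 4
            ≤ |b * (b - 1) * (b - 2) * (b - 3)| * y ^ 4 :=
          mul_le_mul_of_nonneg_right (le_abs_self _) (pow_nonneg hy0.le 4)
        have m2 : |b * (b - 1) * (b - 2) * (b - 3)| * y ^ 4
            ≤ |b * (b - 1) * (b - 2) * (b - 3)| * y ^ 2 :=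
          mul_le_mul_of_nonneg_left hp4 (abs_nonneg _)
        linarith
      have e5 : -( |b * (b - 1) * (b - 2) * (b - 3) * (b - 4)| / 120 * y ^ 2)
          ≤ b * (b - 1) * (b - 2) * (b - 3) * (b - 4) / 120 * y ^ 5 := by
        have m1 : -(|b * (b - 1) * (b - 2) * (b - 3) * (b - 4)|) * y ^ 5
            ≤ b * (b - 1) * (b - 2) * (b - 3) * (b - 4) * y ^ 5 :=
          mul_le_mul_of_nonneg_right (neg_abs_le _) (pow_nonneg hy0.le 5)
        have m2 : |b * (b - 1) * (b - 2) * (b - 3) * (b - 4)| * y ^ 5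
            ≤ |b * (b - 1) * (b - 2) * (b - 3) * (b - 4)| * y ^ 2 :=
          mul_le_mul_of_nonneg_left hp5 (abs_nonneg _)
        linarith
      have e6 : -( |b * (b - 1) * (b - 2) * (b - 3) * (b - 4) * (b - 5)| / 720 * y ^ 2)
          ≤ -(b * (b - 1) * (b - 2) * (b - 3) * (b - 4) * (b - 5) / 720 * y ^ 6) := by
        have m1 : b * (b - 1) * (b - 2) * (b - 3) * (b - 4) * (b - 5) * y ^ 6
            ≤ |b * (b - 1) * (b - 2) * (b - 3) * (b - 4) * (b - 5)| * y ^ 6 :=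
          mul_le_mul_of_nonneg_right (le_abs_self _) (pow_nonneg hy0.le 6)
        have m2 : |b * (b - 1) * (b - 2) * (b - 3) * (b - 4) * (b - 5)| * y ^ 6
            ≤ |b * (b - 1) * (b - 2) * (b - 3) * (b - 4) * (b - 5)| * y ^ 2 :=
          mul_le_mul_of_nonneg_left hp6 (abs_nonneg _)
        linarith
      have e7 : -(K * y ^ 2) ≤ -(K * y ^ 7) := by
        have := mul_le_mul_of_nonneg_left hp7 hKnn
        linarith
      linarith [e3, e4, e5, e6, e7]
    have hBy : B * y ≤ b / 2 := by
      have hyb : y ≤ b / (2 * B) := le_trans hyδ (hδdef ▸ min_le_right _ _)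
      rw [le_div_iff₀ (by linarith : (0:ℝ) < 2 * B)] at hyb
      linarith
    have h3 : B * y * y ≤ b / 2 * y := mul_le_mul_of_nonneg_right hBy hy0.le
    have h4 : B * y * y = B * y ^ 2 := by ring
    linarith [ht.1]
  have hne : ∀ y : ℝ, 0 < y → y ≤ δ → (0 : ℝ) < 1 - (1 - y) ^ b := by
    intro y hy0 hyδ
    have h1 := hlow y hy0 hyδ
    have h2 : 0 < b * y := mul_pos hb0 hy0
    linarith
  -- the degree-5 Taylor polynomial of y / (1 - (1-y)^b)
  obtain ⟨q0, hq0⟩ : ∃ q0 : ℝ, q0 = 1 / b := ⟨_, rfl⟩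
  obtain ⟨q1, hq1⟩ : ∃ q1 : ℝ, q1 = (b - 1) / (2 * b) := ⟨_, rfl⟩
  obtain ⟨q2, hq2⟩ : ∃ q2 : ℝ, q2 = (b ^ 2 - 1) / (12 * b) := ⟨_, rfl⟩
  obtain ⟨q3, hq3⟩ : ∃ q3 : ℝ, q3 = (b ^ 2 - 1) / (24 * b) := ⟨_, rfl⟩
  obtain ⟨q4, hq4⟩ : ∃ q4 : ℝ, q4 = (-b ^ 4 + 20 * b ^ 2 - 19) / (720 * b) := ⟨_, rfl⟩
  obtain ⟨q5, hq5def⟩ : ∃ q5 : ℝ, q5 = (9 - b ^ 2) * (b ^ 2 - 1) / (480 * b) := ⟨_, rfl⟩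
  obtain ⟨Q, hQdef⟩ : ∃ Q : ℝ → ℝ, Q = fun y => q0 + q1 * y + q2 * y ^ 2
      + q3 * y ^ 3 + q4 * y ^ 4 + q5 * y ^ 5 := ⟨_, rfl⟩
  obtain ⟨s0, hs0⟩ : ∃ s0 : ℝ, s0 = 1111 / 8640 - 7 / 20 * b + 61 / 180 * b ^ 2 - 7 / 48 * b ^ 3
      + 31 / 960 * b ^ 4 - 1 / 240 * b ^ 5 + 1 / 4320 * b ^ 6 := ⟨_, rfl⟩
  obtain ⟨s1, hs1⟩ : ∃ s1 : ℝ, s1 = 101 / 2880 - 1219 / 17280 * b + 17 / 1440 * b ^ 2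
      + 37 / 640 * b ^ 3 - 131 / 2880 * b ^ 4 + 73 / 5760 * b ^ 5 - 1 / 720 * b ^ 6
      + 1 / 17280 * b ^ 7 := ⟨_, rfl⟩
  obtain ⟨s2, hs2⟩ : ∃ s2 : ℝ, s2 = 487 / 28800 - 245 / 6912 * b + 133 / 17280 * b ^ 2
      + 67 / 2304 * b ^ 3 - 11 / 450 * b ^ 4 + 5 / 768 * b ^ 5 - 1 / 5760 * b ^ 6
      - 1 / 6912 * b ^ 7 + 1 / 86400 * b ^ 8 := ⟨_, rfl⟩
  obtain ⟨s3, hs3⟩ : ∃ s3 : ℝ, s3 = 11 / 1350 - 1157 / 64800 * b + 17 / 3456 * b ^ 2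
      + 1511 / 103680 * b ^ 3 - 193 / 14400 * b ^ 4 + 619 / 172800 * b ^ 5 + 1 / 3456 * b ^ 6
      - 31 / 103680 * b ^ 7 + 1 / 21600 * b ^ 8 - 1 / 518400 * b ^ 9 := ⟨_, rfl⟩
  obtain ⟨s4, hs4⟩ : ∃ s4 : ℝ, s4 = 1 / 320 - 137 / 19200 * b + 11 / 4608 * b ^ 2
      + 79 / 13824 * b ^ 3 - 133 / 23040 * b ^ 4 + 21 / 12800 * b ^ 5 + 1 / 4608 * b ^ 6
      - 1 / 4608 * b ^ 7 + 1 / 23040 * b ^ 8 - 1 / 345600 * b ^ 9 := ⟨_, rfl⟩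
  obtain ⟨S, hSdef⟩ : ∃ S : ℝ → ℝ, S = fun y => s0 + s1 * y + s2 * y ^ 2 + s3 * y ^ 3
      + s4 * y ^ 4 := ⟨_, rfl⟩
  have hiden : ∀ y : ℝ, y - Q y * P y = y ^ 7 * S y := by
    intro y
    simp only [hQdef, hPdef, hSdef, hq0, hq1, hq2, hq3, hq4, hq5def, hs0, hs1, hs2, hs3, hs4]
    exact sibuya_iden b hb0' y
  -- bounds for |Q| and |S| on [0,1]
  have tri : ∀ x z : ℝ, |x - z| ≤ |x| + |z| := fun x z => by
    rw [sub_eq_add_neg]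
    simpa [abs_neg] using abs_add_le x (-z)
  obtain ⟨Qb, hQbdef⟩ : ∃ Qb : ℝ, Qb = |q0| + |q1| + |q2| + |q3| + |q4| + |q5| := ⟨_, rfl⟩
  obtain ⟨Sb, hSbdef⟩ : ∃ Sb : ℝ, Sb = |s0| + |s1| + |s2| + |s3| + |s4| := ⟨_, rfl⟩
  have key : ∀ a z : ℝ, |z| ≤ 1 → |a * z| ≤ |a| := fun a z hz => by
    rw [abs_mul]
    have := mul_le_mul_of_nonneg_left hz (abs_nonneg a)
    linarith
  have hQbnd : ∀ y : ℝ, 0 ≤ y → y ≤ 1 → |Q y| ≤ Qb := by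
    intro y h0 h1
    have hy1 : |y| ≤ 1 := abs_le.mpr ⟨by linarith, h1⟩
    have hyk : ∀ k : ℕ, |y ^ k| ≤ 1 := fun k => by
      rw [abs_pow]
      exact pow_le_one₀ (abs_nonneg y) hy1
    rw [hQdef, hQbdef]
    simp only
    linarith [abs_add_le (q0 + q1 * y + q2 * y ^ 2 + q3 * y ^ 3 + q4 * y ^ 4) (q5 * y ^ 5),
      abs_add_le (q0 + q1 * y + q2 * y ^ 2 + q3 * y ^ 3) (q4 * y ^ 4),
      abs_add_le (q0 + q1 * y + q2 * y ^ 2) (q3 * y ^ 3),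
      abs_add_le (q0 + q1 * y) (q2 * y ^ 2), abs_add_le q0 (q1 * y),
      key q1 y hy1, key q2 (y ^ 2) (hyk 2), key q3 (y ^ 3) (hyk 3),
      key q4 (y ^ 4) (hyk 4), key q5 (y ^ 5) (hyk 5)]
  have hSbnd : ∀ y : ℝ, 0 ≤ y → y ≤ 1 → |S y| ≤ Sb := by
    intro y h0 h1
    have hy1 : |y| ≤ 1 := abs_le.mpr ⟨by linarith, h1⟩
    have hyk : ∀ k : ℕ, |y ^ k| ≤ 1 := fun k => by
      rw [abs_pow]
      exact pow_le_one₀ (abs_nonneg y) hy1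
    rw [hSdef, hSbdef]
    simp only
    linarith [abs_add_le (s0 + s1 * y + s2 * y ^ 2 + s3 * y ^ 3) (s4 * y ^ 4),
      abs_add_le (s0 + s1 * y + s2 * y ^ 2) (s3 * y ^ 3),
      abs_add_le (s0 + s1 * y) (s2 * y ^ 2), abs_add_le s0 (s1 * y),
      key s1 y hy1, key s2 (y ^ 2) (hyk 2), key s3 (y ^ 3) (hyk 3), key s4 (y ^ 4) (hyk 4)]
  have hQbnn : 0 ≤ Qb := by rw [hQbdef]; positivity
  have hSbnn : 0 ≤ Sb := by rw [hSbdef]; positivity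
  obtain ⟨K3, hK3def⟩ : ∃ K3 : ℝ, K3 = 2 * (Sb + Qb * K) / b + 1 := ⟨_, rfl⟩
  have hK3pos : 0 < K3 := by
    rw [hK3def]
    have : 0 ≤ 2 * (Sb + Qb * K) / b := by positivity
    linarith
  -- the key estimate
  have hfQ : ∀ y : ℝ, 0 < y → y ≤ δ → |y / (1 - (1 - y) ^ b) - Q y| ≤ K3 * y ^ 6 := by
    intro y hy0 hyδ
    have hden := hlow y hy0 hyδ
    have hdpos : 0 < 1 - (1 - y) ^ b := lt_of_lt_of_le (by positivity) hden
    have hy1 : y ≤ 1 := le_trans hyδ (by linarith)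
    have hQy := hQbnd y hy0.le hy1
    have hSy := hSbnd y hy0.le hy1
    have hTy := hT y ⟨hy0.le, le_trans hyδ hδle⟩
    have hnum : |y - Q y * (1 - (1 - y) ^ b)| ≤ (Sb + Qb * K) * y ^ 7 := by
      have split : y - Q y * (1 - (1 - y) ^ b)
          = (y - Q y * P y) - Q y * ((1 - (1 - y) ^ b) - P y) := by ring
      rw [split, hiden y]
      have h1 := tri (y ^ 7 * S y) (Q y * ((1 - (1 - y) ^ b) - P y))
      have h2 : |y ^ 7 * S y| ≤ y ^ 7 * Sb := by
        rw [abs_mul, abs_of_nonneg (by positivity : (0:ℝ) ≤ y ^ 7)]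
        exact mul_le_mul_of_nonneg_left hSy (by positivity)
      have h3 : |Q y * ((1 - (1 - y) ^ b) - P y)| ≤ Qb * (K * y ^ 7) := by
        rw [abs_mul]
        exact mul_le_mul hQy hTy (abs_nonneg _) hQbnn
      calc |y ^ 7 * S y - Q y * ((1 - (1 - y) ^ b) - P y)|
          ≤ |y ^ 7 * S y| + |Q y * ((1 - (1 - y) ^ b) - P y)| := h1
        _ ≤ y ^ 7 * Sb + Qb * (K * y ^ 7) := by linarith
        _ = (Sb + Qb * K) * y ^ 7 := by ring
    have hrep : y / (1 - (1 - y) ^ b) - Q y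
        = (y - Q y * (1 - (1 - y) ^ b)) / (1 - (1 - y) ^ b) := by
      field_simp
    rw [hrep, abs_div, abs_of_pos hdpos]
    have hstep : |y - Q y * (1 - (1 - y) ^ b)| / (1 - (1 - y) ^ b)
        ≤ ((Sb + Qb * K) * y ^ 7) / (b * y / 2) :=
      div_le_div₀ (by positivity) hnum (by positivity) hden
    refine le_trans hstep ?_
    have heq : ((Sb + Qb * K) * y ^ 7) / (b * y / 2) = (2 * (Sb + Qb * K) / b) * y ^ 6 := by
      field_simp
    rw [heq, hK3def]
    have h6 : (0:ℝ) ≤ y ^ 6 := pow_nonneg hy0.le 6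
    linarith [h6]
  have hq5neg : q5 < 0 := by
    rw [hq5def]
    have h1 : 9 - b ^ 2 < 0 := by nlinarith
    have h2 : 0 < b ^ 2 - 1 := by nlinarith
    exact div_neg_of_neg_of_pos (mul_neg_of_neg_of_pos h1 h2) (by linarith)
  obtain ⟨K4, hK4def⟩ : ∃ K4 : ℝ, K4 = 32 * K3 * 46656 := ⟨_, rfl⟩
  have hK4pos : 0 < K4 := by rw [hK4def]; linarith [hK3pos]
  -- choose x
  obtain ⟨x, hxdef⟩ : ∃ x : ℝ, x = min (min (ε / 2) (δ / 6)) (-60 * q5 / K4) := ⟨_, rfl⟩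
  have hxpos : 0 < x := by
    rw [hxdef]
    apply lt_min (lt_min (by linarith) (by linarith))
    apply div_pos (by linarith) hK4pos
  have hxε : x < ε := by
    have : x ≤ ε / 2 := hxdef ▸ le_trans (min_le_left _ _) (min_le_left _ _)
    linarith
  have hx6 : 6 * x ≤ δ := by
    have : x ≤ δ / 6 := hxdef ▸ le_trans (min_le_left _ _) (min_le_right _ _)
    linarith
  have hxq : K4 * x ≤ -60 * q5 := by
    have h1 : x ≤ -60 * q5 / K4 := hxdef ▸ min_le_right _ _
    rw [le_div_iff₀ hK4pos] at h1
    linarith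
  refine ⟨x, hxpos, hxε, ?_⟩
  -- the six pointwise estimates
  have hpt : ∀ k : ℝ, 1 ≤ k → k ≤ 6 →
      |k * x / (1 - (1 - k * x) ^ b) - Q (k * x)| ≤ K3 * (46656 * x ^ 6) := by
    intro k hk1 hk6
    have hkx0 : 0 < k * x := mul_pos (by linarith) hxpos
    have hkx6 : k * x ≤ 6 * x := mul_le_mul_of_nonneg_right hk6 hxpos.le
    have hkxδ : k * x ≤ δ := le_trans hkx6 hx6
    refine le_trans (hfQ (k * x) hkx0 hkxδ) ?_
    have h1 : (k * x) ^ 6 ≤ (6 * x) ^ 6 := pow_le_pow_left₀ (le_of_lt hkx0) hkx6 6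
    have h2 : (6 * x) ^ 6 = 46656 * x ^ 6 := by ring
    calc K3 * (k * x) ^ 6 ≤ K3 * (6 * x) ^ 6 := mul_le_mul_of_nonneg_left h1 hK3pos.le
      _ = K3 * (46656 * x ^ 6) := by rw [h2]
  have b6 := hpt 6 (by norm_num) (by norm_num)
  have b5 := hpt 5 (by norm_num) (by norm_num)
  have b4 := hpt 4 (by norm_num) (by norm_num)
  have b3 := hpt 3 (by norm_num) (by norm_num)
  have b2 := hpt 2 (by norm_num) (by norm_num)
  have b1 : |x / (1 - (1 - x) ^ b) - Q x| ≤ K3 * (46656 * x ^ 6) := by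
    have := hpt 1 (by norm_num) (by norm_num)
    simpa using this
  have hQcomb : ((((Q (6 * x) - 5 * Q (5 * x)) + 10 * Q (4 * x)) - 10 * Q (3 * x))
      + 5 * Q (2 * x)) - Q x = 120 * q5 * x ^ 5 := by
    simp only [hQdef]
    ring
  have e6 := abs_le.mp b6
  have e5 := abs_le.mp b5
  have e4 := abs_le.mp b4
  have e3 := abs_le.mp b3
  have e2 := abs_le.mp b2
  have e1 := abs_le.mp b1
  have hx5 : 0 < x ^ 5 := by positivity
  have hK4x : K4 * x * x ^ 5 ≤ -60 * q5 * x ^ 5 := mul_le_mul_of_nonneg_right hxq hx5.le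
  have heq6 : K4 * x * x ^ 5 = K4 * x ^ 6 := by ring
  have hKK : 32 * (K3 * (46656 * x ^ 6)) = K4 * x ^ 6 := by rw [hK4def]; ring
  have hneg : 60 * q5 * x ^ 5 < 0 := by
    have := mul_pos hx5 (by linarith : (0:ℝ) < -(60 * q5))
    linarith
  linarith [e6.1, e6.2, e5.1, e5.2, e4.1, e4.2, e3.1, e3.2, e2.1, e2.2, e1.1, e1.2]
/-- For `b > 3`, `P₅ = (9-b²)(b²-1)/4 < 0`; hence `u/(1-(1-u)^b)` does not have all
nonnegative Taylor coefficients at `0`, i.e. the Sibuya distribution `s_{1/b}` is not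
a progeny. -/
theorem sibuya_not_progeny_gt_three (b : ℝ) (hb : 3 < b) :
    (9 - b ^ 2) * (b ^ 2 - 1) / 4 < 0 ∧
    ¬ ∃ c : ℕ → ℝ, (∀ n : ℕ, 0 ≤ c n) ∧
      ∃ r : ℝ, 0 < r ∧ ∀ u : ℝ, 0 < |u| → |u| < r →
        HasSum (fun n : ℕ => c n * u ^ n) (u / (1 - (1 - u) ^ b)) := by
  constructor
  · have h1 : 0 < b ^ 2 - 1 := by nlinarith
    have h2 : (9 - b ^ 2) * (b ^ 2 - 1) < 0 :=
      mul_neg_of_neg_of_pos (by nlinarith) h1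
    linarith
  · rintro ⟨c, hc, r, hr, hsum⟩
    obtain ⟨x, hx0, hxr, hneg⟩ := sibuya_neg_comb b hb (r / 6) (by linarith)
    have hpt : ∀ k : ℝ, 1 ≤ k → k ≤ 6 →
        HasSum (fun n : ℕ => c n * (k * x) ^ n) (k * x / (1 - (1 - k * x) ^ b)) := by
      intro k hk1 hk6
      have hkx : 0 < k * x := mul_pos (by linarith) hx0
      apply hsum
      · rw [abs_of_pos hkx]; exact hkx
      · rw [abs_of_pos hkx]
        have : k * x ≤ 6 * x := mul_le_mul_of_nonneg_right hk6 hx0.le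
        linarith
    have h6 := hpt 6 (by norm_num) (by norm_num)
    have h5 := hpt 5 (by norm_num) (by norm_num)
    have h4 := hpt 4 (by norm_num) (by norm_num)
    have h3 := hpt 3 (by norm_num) (by norm_num)
    have h2 := hpt 2 (by norm_num) (by norm_num)
    have h1 : HasSum (fun n : ℕ => c n * x ^ n) (x / (1 - (1 - x) ^ b)) := by
      have := hpt 1 (le_refl 1) (by norm_num)
      simpa using this
    have H := ((((h6.sub (h5.mul_left 5)).add (h4.mul_left 10)).sub
      (h3.mul_left 10)).add (h2.mul_left 5)).sub h1
    have Hfun : (fun n : ℕ => ((((c n * (6 * x) ^ n - 5 * (c n * (5 * x) ^ n))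
          + 10 * (c n * (4 * x) ^ n)) - 10 * (c n * (3 * x) ^ n))
          + 5 * (c n * (2 * x) ^ n)) - c n * x ^ n)
        = fun n : ℕ => c n * x ^ n
            * ((6 : ℝ) ^ n - 5 * 5 ^ n + 10 * 4 ^ n - 10 * 3 ^ n + 5 * 2 ^ n - 1) := by
      funext n
      simp only [mul_pow]
      ring
    rw [Hfun] at H
    have hge := hasSum_le (fun n => mul_nonneg (mul_nonneg (hc n) (pow_nonneg hx0.le n))
      (sibuya_e_nonneg n)) hasSum_zero H
    linarith
end

section
/- Let F(v) = 1+v+Σ_{n≥2}A_n v^n and G(v) = 1-v+Σ_{n≥2}a_n v^n be formal power series with F·G = 1, a_n > 0 for all n ≥ 2, and Σ_{n≥2} a_n = ∞. Then there exists n ≥ 2 with A_n < 0. -/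
/-- If `F = 1 + v + Σ_{n≥2} A_n vⁿ` and `G = 1 - v + Σ_{n≥2} a_n vⁿ` are formal power
series with `F·G = 1`, `a_n > 0` for `n ≥ 2` and `Σ_{n≥2} a_n = ∞`, then some
coefficient `A_n` (`n ≥ 2`) of `F` is negative. -/
theorem exists_neg_coeff (F G : PowerSeries ℝ) (hFG : F * G = 1)
    (hF0 : PowerSeries.coeff (R := ℝ) 0 F = 1) (hF1 : PowerSeries.coeff (R := ℝ) 1 F = 1)
    (hG0 : PowerSeries.coeff (R := ℝ) 0 G = 1) (hG1 : PowerSeries.coeff (R := ℝ) 1 G = -1)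
    (hpos : ∀ n : ℕ, 2 ≤ n → 0 < PowerSeries.coeff (R := ℝ) n G)
    (hdiv : ¬ Summable (fun n : ℕ => PowerSeries.coeff (R := ℝ) (n + 2) G)) :
    ∃ n : ℕ, 2 ≤ n ∧ PowerSeries.coeff (R := ℝ) n F < 0 := by
  by_contra hcon
  push_neg at hcon
  set A : ℕ → ℝ := fun n => PowerSeries.coeff (R := ℝ) n F with hA
  set a : ℕ → ℝ := fun n => PowerSeries.coeff (R := ℝ) n G with ha
  have hAnn : ∀ n, 0 ≤ A n := by
    intro n
    match n with
    | 0 => simp [hA, hF0]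
    | 1 => simp [hA, hF1]
    | (k+2) => exact hcon (k+2) (by omega)
  have hconv : ∀ n : ℕ, n ≠ 0 → ∑ k ∈ Finset.range (n+1), A k * a (n - k) = 0 := by
    intro n hn
    have h1 := congrArg (PowerSeries.coeff (R := ℝ) n) hFG
    rw [PowerSeries.coeff_mul, PowerSeries.coeff_one,
      Finset.Nat.sum_antidiagonal_eq_sum_range_succ_mk] at h1
    simpa [hn] using h1
  have key : ∀ m : ℕ, a (m + 3) ≤ A (m + 2) - A (m + 3) := by
    intro m
    have h0 := hconv (m + 3) (by omega)
    rw [show m + 3 + 1 = (m + 2) + 1 + 1 from rfl, Finset.sum_range_succ,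
      Finset.sum_range_succ, Finset.sum_range_succ'] at h0
    have hS : 0 ≤ ∑ k ∈ Finset.range (m+1), A (k+1) * a (m + 3 - (k+1)) := by
      apply Finset.sum_nonneg
      intro k hk
      have hk' : k < m + 1 := Finset.mem_range.mp hk
      exact mul_nonneg (hAnn _) (le_of_lt (hpos _ (by omega)))
    have e1 : m + 3 - (m + 2) = 1 := by omega
    have e2 : m + 3 - (m + 3) = 0 := by omega
    have e3 : m + 3 - 0 = m + 3 := rfl
    rw [e1, e2, e3] at h0
    have hA0 : A 0 = 1 := hF0
    have ha0 : a 0 = 1 := hG0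
    have ha1 : a 1 = -1 := hG1
    rw [hA0, ha0, ha1] at h0
    linarith
  have hbdd : ∀ N, ∑ n ∈ Finset.range N, a (n + 3) ≤ A 2 := by
    intro N
    calc ∑ n ∈ Finset.range N, a (n + 3)
        ≤ ∑ n ∈ Finset.range N, (A (n + 2) - A (n + 3)) :=
          Finset.sum_le_sum (fun i _ => key i)
      _ = A 2 - A (N + 2) := Finset.sum_range_sub' (fun i => A (i + 2)) N
      _ ≤ A 2 := by linarith [hAnn (N + 2)]
  have hsum3 : Summable (fun n => a (n + 3)) :=
    summable_of_sum_range_le (fun n => (hpos (n + 3) (by omega)).le) hbdd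
  have hsum2 : Summable (fun n => a (n + 2)) :=
    (summable_nat_add_iff (f := fun n => a (n + 2)) 1).mp hsum3
  exact hdiv hsum2
end

section
/- Let p be an offspring distribution with probability generating function f_p of radius of convergence R ≥ 1, with progeny generating function f_q satisfying f_q(z) = z f_p(f_q(z)). Fix r ∈ (0,R) with r f_p'(r)/f_p(r) ≤ 1, define f_{p^{(r)}}(z) = f_p(rz)/f_p(r), and let ρ satisfy r = f_q(ρ). Then f_{q^{(ρ)}}(z) := f_q(ρz)/f_q(ρ) satisfies f_{q^{(ρ)}}(z) = z f_{p^{(r)}}(f_{q^{(ρ)}}(z)); i.e., the progeny of the exponentially tilted offspring law p^{(r)} is the exponentially tilted law q^{(ρ)}. -/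
/-- Exponential tilting of branching processes: if `f_q(z) = z f_p(f_q(z))` and
`r = f_q(ρ)` with `ρ ∈ (0,1]`, `f_p` having radius of convergence `R ≥ 1`, `r ∈ (0,R)`
and `r f_p'(r)/f_p(r) ≤ 1`, then `f_{q^{(ρ)}}(z) := f_q(ρz)/f_q(ρ)` satisfies the
progeny equation for the tilted offspring law `f_{p^{(r)}}(z) = f_p(rz)/f_p(r)`. -/
theorem tilted_progeny (fp fq : ℝ → ℝ) (R r ρ : ℝ) (hR : 1 ≤ R)
    (hρ : ρ ∈ Set.Ioc (0:ℝ) 1) (hr : r ∈ Set.Ioo (0:ℝ) R)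
    (heq : ∀ z ∈ Set.Icc (0:ℝ) 1, fq z = z * fp (fq z))
    (hrρ : r = fq ρ)
    (hm : r * deriv fp r / fp r ≤ 1)
    (hfp : fp r ≠ 0) :
    ∀ z ∈ Set.Icc (0:ℝ) 1,
      fq (ρ * z) / fq ρ = z * (fp (r * (fq (ρ * z) / fq ρ)) / fp r) := by
  intro z hz
  obtain ⟨hρ0, hρ1⟩ := hρ
  obtain ⟨hz0, hz1⟩ := hz
  have hρz : ρ * z ∈ Set.Icc (0:ℝ) 1 :=
    ⟨mul_nonneg hρ0.le hz0, by nlinarith⟩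
  have hρmem : ρ ∈ Set.Icc (0:ℝ) 1 := ⟨hρ0.le, hρ1⟩
  have h1 : fq (ρ * z) = ρ * z * fp (fq (ρ * z)) := heq _ hρz
  have h2 : fq ρ = ρ * fp r := by rw [hrρ] at *; exact heq _ hρmem
  have hq0 : fq ρ ≠ 0 := by rw [← hrρ]; exact ne_of_gt hr.1
  have hrq : r * (fq (ρ * z) / fq ρ) = fq (ρ * z) := by
    rw [hrρ]; field_simp
  rw [hrq, h2]
  rw [div_eq_iff (by positivity), mul_comm z]
  field_simp
  linear_combination h1
end
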